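/- Define a sequence of Laurent polynomials over ℚ by ξ₁ = 1 − 1/(xy) and ξ_{m+1} = (x−1)ξ_m + y^{-1}(y−1)^{m+1}. Then for every m ≥ 1, ξ_m vanishes to order at least m at (1,1), i.e., all partial derivatives of ξ_m of order < m vanish at the point (1,1). -/

import Mathlib

noncomputable section

/-- Laurent polynomials in two variables over `K`. -/
abbrev LP (K : Type*) [Field K] := AddMonoidAlgebra K (ℤ × ℤ)

/-- Embedding of lattice points into the real plane. -/
def toR : ℤ × ℤ → ℝ × ℝ := fun p => ((p.1 : ℝ), (p.2 : ℝ))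

/-- The Newton polytope of a Laurent polynomial: convex hull of its exponent vectors. -/
def newtonPolytope {K : Type*} [Field K] (f : LP K) : Set (ℝ × ℝ) :=
  convexHull ℝ (toR '' (f.coeff.support : Set (ℤ × ℤ)))

/-- The variable `x`. -/
def Xv (K : Type*) [Field K] : LP K := AddMonoidAlgebra.single ((1 : ℤ), (0 : ℤ)) 1

/-- The variable `y`. -/
def Yv (K : Type*) [Field K] : LP K := AddMonoidAlgebra.single ((0 : ℤ), (1 : ℤ)) 1

/-- The maximal ideal of the point `(1,1)` of the torus, generated by `x - 1` and `y - 1`.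
A Laurent polynomial vanishes to order at least `m` at `(1,1)` iff it lies in the `m`-th
power of this ideal. -/
def ptIdeal (K : Type*) [Field K] : Ideal (LP K) :=
  Ideal.span {Xv K - 1, Yv K - 1}

/-- The Laurent polynomial `ξ₁ = 1 - 1/(xy)`. -/
def xiOne (K : Type*) [Field K] : LP K :=
  1 - AddMonoidAlgebra.single ((-1 : ℤ), (-1 : ℤ)) 1

/-- The Laurent polynomial `ξ₂ = 1/(xy) - 3 + x + y`. -/
def xiTwo (K : Type*) [Field K] : LP K :=
  AddMonoidAlgebra.single ((-1 : ℤ), (-1 : ℤ)) 1 - 3 + Xv K + Yv K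

/-- The sequence `ξ₁ = 1 − 1/(xy)`, `ξ_{m+1} = (x−1)ξ_m + y⁻¹(y−1)^{m+1}`,
indexed here so that `xiA m = ξ_{m+1}`. -/
def xiA : ℕ → LP ℚ
  | 0 => xiOne ℚ
  | n + 1 => (Xv ℚ - 1) * xiA n
      + AddMonoidAlgebra.single ((0 : ℤ), (-1 : ℤ)) 1 * (Yv ℚ - 1) ^ (n + 2)

/-- For every `m ≥ 1`, the Laurent polynomial `ξ_m` of the first family vanishes to
order at least `m` at the point `(1,1)`. -/

lemma hxmem : Xv ℚ - 1 ∈ ptIdeal ℚ := Ideal.subset_span (Or.inl rfl)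
lemma hymem : Yv ℚ - 1 ∈ ptIdeal ℚ := Ideal.subset_span (Or.inr rfl)

lemma xiOne_eq : xiOne ℚ =
    AddMonoidAlgebra.single ((-1 : ℤ), (-1 : ℤ)) 1 * ((Xv ℚ - 1) * Yv ℚ + (Yv ℚ - 1)) := by
  have h1 : (Xv ℚ - 1) * Yv ℚ + (Yv ℚ - 1) = Xv ℚ * Yv ℚ - 1 := by ring
  rw [h1]
  have h2 : Xv ℚ * Yv ℚ = AddMonoidAlgebra.single ((1 : ℤ), (1 : ℤ)) 1 := by
    simp [Xv, Yv, AddMonoidAlgebra.single_mul_single, Prod.ext_iff]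
  rw [h2, mul_sub, mul_one, AddMonoidAlgebra.single_mul_single]
  have h3 : ((-1 : ℤ), (-1 : ℤ)) + ((1 : ℤ), (1 : ℤ)) = 0 := by decide
  rw [h3]
  simp [xiOne, AddMonoidAlgebra.one_def]

lemma xiA_mem (n : ℕ) : xiA n ∈ ptIdeal ℚ ^ (n + 1) := by
  induction n with
  | zero =>
    rw [pow_one, xiA, xiOne_eq]
    exact Ideal.mul_mem_left _ _
      (add_mem (Ideal.mul_mem_right _ _ hxmem) hymem)
  | succ n ih =>
    rw [xiA]
    refine add_mem ?_ (Ideal.mul_mem_left _ _ (Ideal.pow_mem_pow hymem (n + 2)))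
    rw [pow_succ']
    exact Ideal.mul_mem_mul hxmem ih

theorem stmt17 (m : ℕ) (hm : 1 ≤ m) : xiA (m - 1) ∈ ptIdeal ℚ ^ m := by
  obtain ⟨n, rfl⟩ := Nat.exists_eq_add_of_le hm
  simpa [Nat.add_comm] using xiA_mem n
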